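/- For every complex number q with |q| < 1, the series and the infinite product below converge and ∑_{j=1}^{∞} j · ( q^{j(j-1)/2} - q^{j(j+1)/2} ) = ∏_{n=1}^{∞} (1 - qⁿ)(1 + qⁿ)². -/

import Mathlib

open Finset Filter Complex Topology

namespace PSF

noncomputable section

def E (q : ℂ) (j : ℕ) : ℂ := ∏ i ∈ Finset.range j, (1 - q ^ (i + 1))

def P (q : ℂ) (j : ℕ) : ℂ := ∏ i ∈ Finset.range j, (1 + q ^ (i + 1))

def num (q : ℂ) (N k : ℕ) : ℂ := ∏ j ∈ Finset.range k, (1 - q ^ (N + 1 - (k - j)))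

def gb (q : ℂ) (N k : ℕ) : ℂ := num q N k / E q k

variable {q : ℂ}

lemma pow_succ_ne_one (hq : ‖q‖ < 1) (i : ℕ) : q ^ (i + 1) ≠ 1 := by
  intro h
  have : ‖q ^ (i + 1)‖ < 1 := by
    rw [norm_pow]
    exact pow_lt_one₀ (norm_nonneg q) hq (Nat.succ_ne_zero i)
  rw [h, norm_one] at this
  exact lt_irrefl _ this

lemma one_sub_ne (hq : ‖q‖ < 1) (i : ℕ) : (1 : ℂ) - q ^ (i + 1) ≠ 0 :=
  sub_ne_zero.mpr (Ne.symm (pow_succ_ne_one hq i))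

lemma one_add_ne (hq : ‖q‖ < 1) (i : ℕ) : (1 : ℂ) + q ^ (i + 1) ≠ 0 := by
  intro h
  have h1 : q ^ (i + 1) = -1 := by linear_combination h
  have : ‖q ^ (i + 1)‖ < 1 := by
    rw [norm_pow]; exact pow_lt_one₀ (norm_nonneg q) hq (Nat.succ_ne_zero i)
  rw [h1, norm_neg, norm_one] at this
  exact lt_irrefl _ this

lemma E_ne_zero (hq : ‖q‖ < 1) (j : ℕ) : E q j ≠ 0 :=
  Finset.prod_ne_zero_iff.mpr fun i _ => one_sub_ne hq i

lemma E_succ (j : ℕ) : E q (j + 1) = E q j * (1 - q ^ (j + 1)) := Finset.prod_range_succ _ _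

lemma num_succ (N k : ℕ) : num q N (k + 1) = num q N k * (1 - q ^ (N - k)) := by
  unfold num
  rw [Finset.prod_range_succ']
  congr 1
  · exact Finset.prod_congr rfl fun j _ => by congr 2; omega
  · congr 2; omega

lemma num_top (N m : ℕ) : num q (N + 1) (m + 1) = num q N m * (1 - q ^ (N + 1)) := by
  unfold num
  rw [Finset.prod_range_succ]
  congr 1
  · refine Finset.prod_congr rfl fun j hj => ?_
    rw [Finset.mem_range] at hj
    congr 2; omega
  · congr 2; omega

lemma gb_zero (N : ℕ) : gb q N 0 = 1 := by simp [gb, num, E]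

lemma gb_top (hq : ‖q‖ < 1) (N : ℕ) : gb q N (N + 1) = 0 := by
  have : num q N (N + 1) = 0 := by
    refine Finset.prod_eq_zero (Finset.mem_range.mpr (Nat.succ_pos N)) ?_
    simp
  simp [gb, this]

lemma pascal (hq : ‖q‖ < 1) {N m : ℕ} (hm : m ≤ N) :
    gb q (N + 1) (m + 1) = gb q N (m + 1) + q ^ (N - m) * gb q N m := by
  have hpow : q ^ (N - m) * q ^ (m + 1) = q ^ (N + 1) := by
    rw [← pow_add]; congr 1; omega
  have hE : E q (m + 1) ≠ 0 := E_ne_zero hq (m + 1)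
  have hEm : E q m ≠ 0 := E_ne_zero hq m
  have hd : (1 : ℂ) - q ^ (m + 1) ≠ 0 := one_sub_ne hq m
  have key : num q N m * (1 - q ^ (N + 1))
      = num q N m * (1 - q ^ (N - m)) + q ^ (N - m) * (1 - q ^ (m + 1)) * num q N m := by
    linear_combination (num q N m) * hpow
  simp only [gb]
  rw [num_top, num_succ, E_succ, key, add_div]
  congr 1
  field_simp

lemma tri_succ (k : ℕ) : (k + 1) * k / 2 = k * (k - 1) / 2 + k := by
  have h2 : (k + 1) * k = k * (k - 1) + 2 * k := by
    cases k with
    | zero => simp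
    | succ m =>
      simp only [Nat.add_sub_cancel]
      ring
  have he : 2 ∣ k * (k - 1) := by
    cases k with
    | zero => simp
    | succ m => simpa [Nat.mul_comm] using (Nat.even_mul_succ_self m).two_dvd
  omega

lemma GBT (hq : ‖q‖ < 1) (N : ℕ) (x : ℂ) :
    ∏ j ∈ Finset.range N, (1 + x * q ^ j)
      = ∑ k ∈ Finset.range (N + 1), q ^ (k * (k - 1) / 2) * gb q N k * x ^ k := by
  induction N with
  | zero => simp [gb_zero]
  | succ N ih =>
    rw [Finset.prod_range_succ, ih]
    have hsplit : ∀ k ∈ Finset.range (N + 1),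
        q ^ ((k + 1) * k / 2) * gb q (N + 1) (k + 1) * x ^ (k + 1)
          = q ^ ((k + 1) * k / 2) * gb q N (k + 1) * x ^ (k + 1)
            + (q ^ (k * (k - 1) / 2) * gb q N k * x ^ k) * (x * q ^ N) := by
      intro k hk
      rw [Finset.mem_range] at hk
      have hkN : k ≤ N := by omega
      rw [pascal hq hkN]
      have hexp : q ^ ((k + 1) * k / 2) * q ^ (N - k) = q ^ (k * (k - 1) / 2) * q ^ N := by
        rw [← pow_add, ← pow_add]
        congr 1
        have := tri_succ k
        omega
      ring_nf
      ring_nf at hexp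
      linear_combination (gb q N k * x^(k+1)) * hexp
    have hf0 : q ^ (0 * (0 - 1) / 2) * gb q (N + 1) 0 * x ^ 0 = 1 := by simp [gb_zero]
    have h1 : (∑ k ∈ Finset.range (N + 1),
          q ^ ((k + 1) * k / 2) * gb q N (k + 1) * x ^ (k + 1)) + 1
        = ∑ k ∈ Finset.range (N + 1), q ^ (k * (k - 1) / 2) * gb q N k * x ^ k := by
      have hs := Finset.sum_range_succ' (fun k => q ^ (k * (k - 1) / 2) * gb q N k * x ^ k) (N + 1)
      rw [Finset.sum_range_succ] at hs
      simp only [Nat.add_sub_cancel, gb_top hq, gb_zero, pow_zero, mul_one, one_mul, mul_zero,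
        zero_mul, add_zero] at hs
      linear_combination hs.symm
    have h2 : (∑ k ∈ Finset.range (N + 1),
          q ^ (k * (k - 1) / 2) * gb q N k * x ^ k * (x * q ^ N))
        = (∑ k ∈ Finset.range (N + 1), q ^ (k * (k - 1) / 2) * gb q N k * x ^ k) * (x * q ^ N) := by
      rw [Finset.sum_mul]
    conv_rhs => rw [Finset.sum_range_succ']
    simp only [Nat.add_sub_cancel]
    rw [Finset.sum_congr rfl hsplit, Finset.sum_add_distrib, h2, hf0]
    linear_combination -h1


lemma num_E (hq : ‖q‖ < 1) {k N : ℕ} (h : k ≤ N) : E q N = E q (N - k) * num q N k := by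
  unfold E num
  conv_lhs => rw [show N = (N - k) + k by omega, Finset.prod_range_add]
  congr 1
  refine Finset.prod_congr rfl fun j hj => ?_
  rw [Finset.mem_range] at hj
  congr 2
  omega

lemma gb_eq (hq : ‖q‖ < 1) {k N : ℕ} (h : k ≤ N) :
    gb q N k = E q N / (E q k * E q (N - k)) := by
  have h1 : E q (N - k) ≠ 0 := E_ne_zero hq _
  have h2 : E q k ≠ 0 := E_ne_zero hq _
  rw [gb]
  conv_rhs => rw [num_E hq h]
  field_simp

lemma div2_add_div2 {a b c w : ℕ} (ha : 2 ∣ a) (hb : 2 ∣ b) (hc : 2 ∣ c)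
    (h : a + b = c + 2 * w) : a / 2 + b / 2 = c / 2 + w := by omega

def eK (n k : ℕ) : ℕ := if n ≤ k then (k - n) * (k - n + 1) / 2 else (n - k) * (n - k - 1) / 2

lemma exp_id {n : ℕ} (hn : 1 ≤ n) (k : ℕ) :
    n * (n - 1) / 2 + k * (k - 1) / 2 = eK n k + (n - 1) * k := by
  obtain ⟨n', rfl⟩ : ∃ n', n = n' + 1 := ⟨n - 1, by omega⟩
  simp only [Nat.add_sub_cancel, eK]
  rcases le_or_gt (n' + 1) k with h | h
  · rw [if_pos h]
    obtain ⟨d, rfl⟩ : ∃ d, k = (n' + 1) + d := ⟨k - (n' + 1), by omega⟩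
    rw [show n' + 1 + d - (n' + 1) = d from by omega,
      show n' + 1 + d - 1 = n' + d from by omega]
    refine div2_add_div2 ?_ ?_ ?_ (by ring)
    · rw [mul_comm]; exact (Nat.even_mul_succ_self n').two_dvd
    · rw [show n' + 1 + d = (n' + d) + 1 from by omega, mul_comm]
      exact (Nat.even_mul_succ_self (n' + d)).two_dvd
    · exact (Nat.even_mul_succ_self d).two_dvd
  · rw [if_neg (by omega)]
    obtain ⟨m, rfl⟩ : ∃ m, n' = k + m := ⟨n' - k, by omega⟩
    cases k with
    | zero => simp
    | succ k' =>
      rw [show k' + 1 + m + 1 - (k' + 1) = m + 1 from by omega,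
        show m + 1 - 1 = m from by omega, show k' + 1 - 1 = k' from by omega]
      refine div2_add_div2 ?_ ?_ ?_ (by ring)
      · rw [show k' + 1 + m + 1 = (k' + 1 + m) + 1 from by omega, mul_comm]
        exact (Nat.even_mul_succ_self (k' + 1 + m)).two_dvd
      · rw [mul_comm]; exact (Nat.even_mul_succ_self k').two_dvd
      · rw [mul_comm]; exact (Nat.even_mul_succ_self m).two_dvd

lemma spec (hq : ‖q‖ < 1) (hq0 : q ≠ 0) {n : ℕ} (hn : 1 ≤ n) :
    ∑ k ∈ Finset.range (2 * n + 1), q ^ (eK n k) * gb q (2 * n) k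
      = 2 * P q (n - 1) * P q n := by
  have hqn : q ^ (n - 1) ≠ 0 := pow_ne_zero _ hq0
  set x : ℂ := (q ^ (n - 1))⁻¹ with hxdef
  have hx := GBT hq (2 * n) x
  have hR : q ^ (n * (n - 1) / 2)
        * ∑ k ∈ Finset.range (2 * n + 1), q ^ (k * (k - 1) / 2) * gb q (2 * n) k * x ^ k
      = ∑ k ∈ Finset.range (2 * n + 1), q ^ (eK n k) * gb q (2 * n) k := by
    rw [Finset.mul_sum]
    refine Finset.sum_congr rfl fun k _ => ?_
    have hxk : x ^ k = (q ^ ((n - 1) * k))⁻¹ := by rw [hxdef, inv_pow, ← pow_mul]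
    have hee : q ^ (n * (n - 1) / 2) * q ^ (k * (k - 1) / 2)
        = q ^ (eK n k) * q ^ ((n - 1) * k) := by
      rw [← pow_add, ← pow_add, exp_id hn k]
    have hne : q ^ ((n - 1) * k) ≠ 0 := pow_ne_zero _ hq0
    calc q ^ (n * (n - 1) / 2) * (q ^ (k * (k - 1) / 2) * gb q (2 * n) k * x ^ k)
        = (q ^ (n * (n - 1) / 2) * q ^ (k * (k - 1) / 2)) * (q ^ ((n - 1) * k))⁻¹
            * gb q (2 * n) k := by rw [hxk]; ring
      _ = q ^ (eK n k) * (q ^ ((n - 1) * k) * (q ^ ((n - 1) * k))⁻¹) * gb q (2 * n) k := by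
            rw [hee]; ring
      _ = q ^ (eK n k) * gb q (2 * n) k := by rw [mul_inv_cancel₀ hne, mul_one]
  have hL : q ^ (n * (n - 1) / 2) * ∏ j ∈ Finset.range (2 * n), (1 + x * q ^ j)
      = 2 * P q (n - 1) * P q n := by
    rw [show 2 * n = (n - 1) + (n + 1) from by omega, Finset.prod_range_add]
    have h2 : ∏ i ∈ Finset.range (n + 1), (1 + x * q ^ ((n - 1) + i)) = 2 * P q n := by
      have hc : ∀ i ∈ Finset.range (n + 1), (1 + x * q ^ ((n - 1) + i)) = 1 + q ^ i := by
        intro i _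
        rw [hxdef, pow_add, inv_mul_cancel_left₀ hqn]
      rw [Finset.prod_congr rfl hc, Finset.prod_range_succ']
      rw [pow_zero]
      rw [show (∏ i ∈ Finset.range n, (1 + q ^ (i + 1))) = P q n from rfl]
      ring
    have hqpow : q ^ (n * (n - 1) / 2) = ∏ j ∈ Finset.range (n - 1), q ^ ((n - 1) - j) := by
      rw [Finset.prod_pow_eq_pow_sum]
      congr 1
      have hrefl := Finset.sum_range_reflect (fun j => j + 1) (n - 1)
      have hcong : ∑ j ∈ Finset.range (n - 1), ((n - 1) - 1 - j + 1)
          = ∑ j ∈ Finset.range (n - 1), ((n - 1) - j) := by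
        refine Finset.sum_congr rfl fun j hj => ?_
        rw [Finset.mem_range] at hj
        omega
      have hshift := Finset.sum_range_succ' (fun j => j) (n - 1)
      rw [show (n - 1) + 1 = n from by omega] at hshift
      have hid := Finset.sum_range_id n
      omega
    have h1 : q ^ (n * (n - 1) / 2) * ∏ j ∈ Finset.range (n - 1), (1 + x * q ^ j)
        = P q (n - 1) := by
      rw [hqpow, ← Finset.prod_mul_distrib]
      have hc : ∀ j ∈ Finset.range (n - 1),
          q ^ ((n - 1) - j) * (1 + x * q ^ j) = 1 + q ^ ((n - 1) - j) := by
        intro j hj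
        rw [Finset.mem_range] at hj
        have hcan : q ^ ((n - 1) - j) * (x * q ^ j) = 1 := by
          rw [hxdef, mul_comm x, ← mul_assoc, ← pow_add,
            show (n - 1) - j + j = n - 1 from by omega]
          exact mul_inv_cancel₀ hqn
        calc q ^ ((n - 1) - j) * (1 + x * q ^ j)
            = q ^ ((n - 1) - j) + q ^ ((n - 1) - j) * (x * q ^ j) := by ring
          _ = 1 + q ^ ((n - 1) - j) := by rw [hcan]; ring
      rw [Finset.prod_congr rfl hc]
      have hrefl := Finset.prod_range_reflect (fun j => 1 + q ^ (j + 1)) (n - 1)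
      have hcong : ∏ j ∈ Finset.range (n - 1), (1 + q ^ ((n - 1) - 1 - j + 1))
          = ∏ j ∈ Finset.range (n - 1), (1 + q ^ ((n - 1) - j)) := by
        refine Finset.prod_congr rfl fun j hj => ?_
        rw [Finset.mem_range] at hj
        congr 2
        omega
      rw [← hcong, hrefl]
      rfl
    calc q ^ (n * (n - 1) / 2)
          * ((∏ j ∈ Finset.range (n - 1), (1 + x * q ^ j))
            * ∏ i ∈ Finset.range (n + 1), (1 + x * q ^ ((n - 1) + i)))
        = (q ^ (n * (n - 1) / 2) * ∏ j ∈ Finset.range (n - 1), (1 + x * q ^ j))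
            * ∏ i ∈ Finset.range (n + 1), (1 + x * q ^ ((n - 1) + i)) := by ring
      _ = P q (n - 1) * (2 * P q n) := by rw [h1, h2]
      _ = 2 * P q (n - 1) * P q n := by ring
  rw [← hR, ← hx, hL]


lemma mult_one_add {f : ℕ → ℂ} (hf : Summable f) (h1 : ∀ n, 1 + f n ≠ 0) :
    Multipliable (fun n => 1 + f n) ∧ (∏' n, (1 + f n)) ≠ 0 := by
  have h0 : Tendsto (fun n => ‖f n‖) atTop (𝓝 0) := by
    simpa using hf.tendsto_atTop_zero.norm
  have hev : ∀ᶠ n in atTop, ‖f n‖ ≤ 1 / 2 :=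
    h0.eventually (eventually_le_nhds (by norm_num))
  have hs : Summable fun n => Complex.log (1 + f n) := by
    refine Summable.of_norm_bounded_eventually_nat (g := fun n => 3 / 2 * ‖f n‖)
      (hf.norm.mul_left _) ?_
    filter_upwards [hev] with n hn
    exact Complex.norm_log_one_add_half_le_self hn
  have hp : HasProd (fun n => 1 + f n)
      (Complex.exp (∑' n, Complex.log (1 + f n))) := by
    have := hs.hasSum.cexp
    rwa [show Complex.exp ∘ (fun n => Complex.log (1 + f n)) = fun n => 1 + f n from
      funext fun n => Complex.exp_log (h1 n)] at this
  exact ⟨⟨_, hp⟩, by rw [hp.tprod_eq]; exact Complex.exp_ne_zero _⟩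

lemma hgeo1 (hq : ‖q‖ < 1) : Summable (fun n : ℕ => q ^ (n + 1)) := by
  refine ((summable_geometric_of_norm_lt_one hq).mul_left q).congr fun n => ?_
  rw [pow_succ]; ring

lemma E_mult (hq : ‖q‖ < 1) :
    Multipliable (fun n : ℕ => 1 - q ^ (n + 1)) ∧ (∏' n : ℕ, (1 - q ^ (n + 1))) ≠ 0 := by
  have h := mult_one_add (f := fun n : ℕ => -q ^ (n + 1)) (hgeo1 hq).neg
    (fun n => by rw [← sub_eq_add_neg]; exact one_sub_ne hq n)
  simpa only [← sub_eq_add_neg] using h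

lemma P_mult (hq : ‖q‖ < 1) :
    Multipliable (fun n : ℕ => 1 + q ^ (n + 1)) ∧ (∏' n : ℕ, (1 + q ^ (n + 1))) ≠ 0 :=
  mult_one_add (hgeo1 hq) (fun n => one_add_ne hq n)

lemma E_tendsto (hq : ‖q‖ < 1) :
    Tendsto (fun j => E q j) atTop (𝓝 (∏' n : ℕ, (1 - q ^ (n + 1)))) :=
  (E_mult hq).1.hasProd.tendsto_prod_nat

lemma P_tendsto (hq : ‖q‖ < 1) :
    Tendsto (fun j => P q j) atTop (𝓝 (∏' n : ℕ, (1 + q ^ (n + 1)))) :=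
  (P_mult hq).1.hasProd.tendsto_prod_nat

lemma exists_pos_lb {f : ℕ → ℝ} {L : ℝ} (hpos : ∀ n, 0 < f n) (hL : 0 < L)
    (h : Tendsto f atTop (𝓝 L)) : ∃ c, 0 < c ∧ ∀ n, c ≤ f n := by
  have hev : ∀ᶠ n in atTop, L / 2 < f n := h.eventually (eventually_gt_nhds (by linarith))
  obtain ⟨N, hN⟩ := Filter.eventually_atTop.mp hev
  have hne : (Finset.range (N + 1)).Nonempty := ⟨0, by simp⟩
  refine ⟨min (L / 2) ((Finset.range (N + 1)).inf' hne f), ?_, ?_⟩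
  · refine lt_min (by linarith) ?_
    rw [Finset.lt_inf'_iff]
    exact fun i _ => hpos i
  · intro n
    rcases le_or_gt n N with hn | hn
    · exact le_trans (min_le_right _ _) (Finset.inf'_le f (Finset.mem_range.mpr (by omega)))
    · exact le_trans (min_le_left _ _) (le_of_lt (hN n (by omega)))

lemma exists_ub {f : ℕ → ℝ} {L : ℝ} (h : Tendsto f atTop (𝓝 L)) : ∃ C, ∀ n, f n ≤ C := by
  have hev : ∀ᶠ n in atTop, f n < L + 1 := h.eventually (eventually_lt_nhds (by linarith))
  obtain ⟨N, hN⟩ := Filter.eventually_atTop.mp hev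
  have hne : (Finset.range (N + 1)).Nonempty := ⟨0, by simp⟩
  refine ⟨max (L + 1) ((Finset.range (N + 1)).sup' hne f), fun n => ?_⟩
  rcases le_or_gt n N with hn | hn
  · exact le_trans (Finset.le_sup' f (Finset.mem_range.mpr (by omega))) (le_max_right _ _)
  · exact le_trans (le_of_lt (hN n (by omega))) (le_max_left _ _)

lemma tri_ge (m : ℕ) : m ≤ m * (m + 1) / 2 := by
  cases m with
  | zero => simp
  | succ k =>
    have h : (k + 1) * 2 ≤ (k + 1) * (k + 1 + 1) := Nat.mul_le_mul le_rfl (by omega)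
    exact (Nat.le_div_iff_mul_le two_pos).mpr h

lemma S_summable (hq : ‖q‖ < 1) : Summable (fun m : ℕ => q ^ (m * (m + 1) / 2)) := by
  refine Summable.of_norm_bounded (g := fun m => ‖q‖ ^ m) (summable_geometric_of_lt_one
    (norm_nonneg q) hq) fun m => ?_
  rw [norm_pow]
  exact pow_le_pow_of_le_one (norm_nonneg q) (le_of_lt hq) (tri_ge m)


lemma key (hq : ‖q‖ < 1) (hq0 : q ≠ 0) {Einf Pinf : ℂ}
    (hE : Tendsto (fun j => E q j) atTop (𝓝 Einf))
    (hP : Tendsto (fun j => P q j) atTop (𝓝 Pinf)) (hEne : Einf ≠ 0) :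
    (∑' m : ℕ, q ^ (m * (m + 1) / 2)) = Einf * (Pinf * Pinf) := by
  obtain ⟨c, hc0, hc⟩ := exists_pos_lb (f := fun j => ‖E q j‖)
    (fun n => norm_pos_iff.mpr (E_ne_zero hq n)) (norm_pos_iff.mpr hEne) hE.norm
  obtain ⟨Cu, hCu⟩ := exists_ub (f := fun j => ‖E q j‖) hE.norm
  have hCu0 : 0 ≤ Cu := le_trans (norm_nonneg _) (hCu 0)
  have hr0 : (0 : ℝ) ≤ ‖q‖ := norm_nonneg q
  set D : ℂ := Einf / (Einf * Einf) with hD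
  set Af : ℕ → ℕ → ℂ := fun n m =>
    if m ≤ n then q ^ (m * (m + 1) / 2) * gb q (2 * n) (n + m) else 0 with hAf
  set Bf : ℕ → ℕ → ℂ := fun n m =>
    if m + 1 ≤ n then q ^ (m * (m + 1) / 2) * gb q (2 * n) (n - 1 - m) else 0 with hBf
  have hgb_norm : ∀ (n k : ℕ), k ≤ 2 * n → ‖gb q (2 * n) k‖ ≤ Cu / (c * c) := by
    intro n k hk
    rw [gb_eq hq hk, norm_div, norm_mul]
    refine div_le_div₀ hCu0 (hCu _) (mul_pos hc0 hc0) ?_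
    exact mul_le_mul (hc _) (hc _) (le_of_lt hc0) (norm_nonneg _)
  have hTmr : ∀ m : ℕ, ‖(q : ℂ) ^ (m * (m + 1) / 2)‖ ≤ ‖q‖ ^ m := fun m => by
    rw [norm_pow]; exact pow_le_pow_of_le_one hr0 hq.le (tri_ge m)
  have hbsum : Summable (fun m : ℕ => Cu / (c * c) * ‖q‖ ^ m) :=
    (summable_geometric_of_lt_one hr0 hq).mul_left _
  have hAb : ∀ n m, ‖Af n m‖ ≤ Cu / (c * c) * ‖q‖ ^ m := by
    intro n m
    by_cases h : m ≤ n
    · simp only [hAf, if_pos h, norm_mul]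
      calc ‖q ^ (m * (m + 1) / 2)‖ * ‖gb q (2 * n) (n + m)‖
          ≤ ‖q‖ ^ m * (Cu / (c * c)) :=
            mul_le_mul (hTmr m) (hgb_norm n (n + m) (by omega)) (norm_nonneg _)
              (pow_nonneg hr0 m)
        _ = Cu / (c * c) * ‖q‖ ^ m := by ring
    · simp only [hAf, if_neg h, norm_zero]
      positivity
  have hBb : ∀ n m, ‖Bf n m‖ ≤ Cu / (c * c) * ‖q‖ ^ m := by
    intro n m
    by_cases h : m + 1 ≤ n
    · simp only [hBf, if_pos h, norm_mul]
      calc ‖q ^ (m * (m + 1) / 2)‖ * ‖gb q (2 * n) (n - 1 - m)‖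
          ≤ ‖q‖ ^ m * (Cu / (c * c)) :=
            mul_le_mul (hTmr m) (hgb_norm n (n - 1 - m) (by omega)) (norm_nonneg _)
              (pow_nonneg hr0 m)
        _ = Cu / (c * c) * ‖q‖ ^ m := by ring
    · simp only [hBf, if_neg h, norm_zero]
      positivity
  have hEc : ∀ (g : ℕ → ℕ), Tendsto g atTop atTop →
      Tendsto (fun n => E q (g n)) atTop (𝓝 Einf) := fun g hg => hE.comp hg
  have h2n : Tendsto (fun n : ℕ => 2 * n) atTop atTop :=
    Filter.tendsto_atTop_atTop.mpr fun b => ⟨b, fun a ha => by omega⟩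
  have hAlim : ∀ m, Tendsto (fun n => Af n m) atTop (𝓝 (q ^ (m * (m + 1) / 2) * D)) := by
    intro m
    have hdiv : Tendsto (fun n => E q (2 * n) / (E q (n + m) * E q (n - m))) atTop (𝓝 D) := by
      rw [hD]
      exact (hEc _ h2n).div
        ((hEc _ (tendsto_add_atTop_nat m)).mul (hEc _ (tendsto_sub_atTop_nat m)))
        (mul_ne_zero hEne hEne)
    refine Tendsto.congr' ?_ (tendsto_const_nhds.mul hdiv)
    filter_upwards [eventually_ge_atTop m] with n hn
    simp only [hAf, if_pos hn]
    rw [gb_eq hq (show n + m ≤ 2 * n by omega), show 2 * n - (n + m) = n - m from by omega]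
  have hBlim : ∀ m, Tendsto (fun n => Bf n m) atTop (𝓝 (q ^ (m * (m + 1) / 2) * D)) := by
    intro m
    have hs1 : Tendsto (fun n : ℕ => n - 1 - m) atTop atTop :=
      Filter.tendsto_atTop_atTop.mpr fun b => ⟨b + m + 1, fun a ha => by omega⟩
    have hs2 : Tendsto (fun n : ℕ => n + 1 + m) atTop atTop :=
      Filter.tendsto_atTop_atTop.mpr fun b => ⟨b, fun a ha => by omega⟩
    have hdiv : Tendsto (fun n => E q (2 * n) / (E q (n - 1 - m) * E q (n + 1 + m))) atTop
        (𝓝 D) := by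
      rw [hD]
      exact (hEc _ h2n).div ((hEc _ hs1).mul (hEc _ hs2)) (mul_ne_zero hEne hEne)
    refine Tendsto.congr' ?_ (tendsto_const_nhds.mul hdiv)
    filter_upwards [eventually_ge_atTop (m + 1)] with n hn
    simp only [hBf, if_pos hn]
    rw [gb_eq hq (show n - 1 - m ≤ 2 * n by omega),
      show 2 * n - (n - 1 - m) = n + 1 + m from by omega]
  have htA : Tendsto (fun n => ∑' m, Af n m) atTop
      (𝓝 (∑' m : ℕ, q ^ (m * (m + 1) / 2) * D)) :=
    tendsto_tsum_of_dominated_convergence hbsum hAlim (Filter.Eventually.of_forall hAb)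
  have htB : Tendsto (fun n => ∑' m, Bf n m) atTop
      (𝓝 (∑' m : ℕ, q ^ (m * (m + 1) / 2) * D)) :=
    tendsto_tsum_of_dominated_convergence hbsum hBlim (Filter.Eventually.of_forall hBb)
  have hident : (fun n => (∑' m, Af n m) + (∑' m, Bf n m))
      =ᶠ[atTop] fun n => 2 * P q (n - 1) * P q n := by
    filter_upwards [eventually_ge_atTop 1] with n hn
    have hA' : (∑' m, Af n m)
        = ∑ m ∈ Finset.range (n + 1), q ^ (m * (m + 1) / 2) * gb q (2 * n) (n + m) := by
      rw [tsum_eq_sum (s := Finset.range (n + 1)) (fun m hm => by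
        rw [Finset.mem_range] at hm
        simp only [hAf]; rw [if_neg (by omega)])]
      refine Finset.sum_congr rfl fun m hm => ?_
      rw [Finset.mem_range] at hm
      simp only [hAf]; rw [if_pos (by omega)]
    have hB' : (∑' m, Bf n m)
        = ∑ m ∈ Finset.range n, q ^ (m * (m + 1) / 2) * gb q (2 * n) (n - 1 - m) := by
      rw [tsum_eq_sum (s := Finset.range n) (fun m hm => by
        rw [Finset.mem_range] at hm
        simp only [hBf]; rw [if_neg (by omega)])]
      refine Finset.sum_congr rfl fun m hm => ?_
      rw [Finset.mem_range] at hm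
      simp only [hBf]; rw [if_pos (by omega)]
    have hsplit : ∑ k ∈ Finset.range (2 * n + 1), q ^ (eK n k) * gb q (2 * n) k
        = (∑ k ∈ Finset.range n, q ^ (eK n k) * gb q (2 * n) k)
          + ∑ i ∈ Finset.range (n + 1), q ^ (eK n (n + i)) * gb q (2 * n) (n + i) := by
      rw [show 2 * n + 1 = n + (n + 1) from by omega]
      exact Finset.sum_range_add _ n (n + 1)
    rw [hA', hB', ← spec hq hq0 hn, hsplit]
    have h1 : ∑ k ∈ Finset.range n, q ^ (eK n k) * gb q (2 * n) k
        = ∑ m ∈ Finset.range n, q ^ (m * (m + 1) / 2) * gb q (2 * n) (n - 1 - m) := by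
      rw [← Finset.sum_range_reflect]
      refine Finset.sum_congr rfl fun m hm => ?_
      rw [Finset.mem_range] at hm
      have he : eK n (n - 1 - m) = m * (m + 1) / 2 := by
        unfold eK
        rw [if_neg (by omega), show n - (n - 1 - m) = m + 1 from by omega,
          Nat.add_sub_cancel, mul_comm]
      rw [he]
    have h2 : ∑ i ∈ Finset.range (n + 1), q ^ (eK n (n + i)) * gb q (2 * n) (n + i)
        = ∑ m ∈ Finset.range (n + 1), q ^ (m * (m + 1) / 2) * gb q (2 * n) (n + m) := by
      refine Finset.sum_congr rfl fun i _ => ?_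
      have he : eK n (n + i) = i * (i + 1) / 2 := by
        unfold eK
        rw [if_pos (by omega), show n + i - n = i from by omega]
      rw [he]
    rw [h1, h2]
    exact add_comm _ _
  have htL : Tendsto (fun n => 2 * P q (n - 1) * P q n) atTop (𝓝 (2 * Pinf * Pinf)) := by
    have h1 : Tendsto (fun n : ℕ => P q (n - 1)) atTop (𝓝 Pinf) :=
      hP.comp (tendsto_sub_atTop_nat 1)
    exact (tendsto_const_nhds.mul h1).mul hP
  have hfin : (∑' m : ℕ, q ^ (m * (m + 1) / 2) * D) + (∑' m : ℕ, q ^ (m * (m + 1) / 2) * D)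
      = 2 * Pinf * Pinf :=
    tendsto_nhds_unique (Tendsto.congr' hident (htA.add htB)) htL
  rw [tsum_mul_right] at hfin
  have hDval : D = Einf⁻¹ := by rw [hD]; field_simp
  rw [hDval] at hfin
  have hfin2 : (∑' m : ℕ, q ^ (m * (m + 1) / 2)) + (∑' m : ℕ, q ^ (m * (m + 1) / 2))
      = 2 * Pinf * Pinf * Einf := by
    have h := congrArg (fun z : ℂ => z * Einf) hfin
    simpa [add_mul, mul_assoc, inv_mul_cancel₀ hEne] using h
  linear_combination hfin2 / 2


lemma main_summable (hq : ‖q‖ < 1) :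
    Summable fun i : ℕ =>
      ((i : ℂ) + 1) * (q ^ ((i + 1) * i / 2) - q ^ ((i + 1) * (i + 2) / 2)) := by
  have hr0 : (0:ℝ) ≤ ‖q‖ := norm_nonneg q
  have hr' : ‖(‖q‖ : ℝ)‖ < 1 := by rwa [norm_norm]
  have hg : Summable (fun i : ℕ => (i : ℝ) * ‖q‖ ^ i) := by
    simpa [pow_one] using summable_pow_mul_geometric_of_norm_lt_one 1 hr'
  have hg2 : Summable (fun i : ℕ => 2 * (((i : ℝ) + 1) * ‖q‖ ^ i)) := by
    refine ((hg.add (summable_geometric_of_lt_one hr0 hq)).mul_left 2).congr fun i => ?_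
    ring
  refine Summable.of_norm_bounded hg2 fun i => ?_
  have hni : ‖((i : ℂ) + 1)‖ = (i : ℝ) + 1 := by
    rw [show ((i : ℂ) + 1) = ((i + 1 : ℕ) : ℂ) by push_cast; ring, Complex.norm_natCast]
    push_cast; ring
  have hia : i ≤ (i + 1) * i / 2 := by
    rw [mul_comm]; exact tri_ge i
  have hib : i ≤ (i + 1) * (i + 2) / 2 := by
    refine le_trans hia (Nat.div_le_div_right ?_)
    exact Nat.mul_le_mul le_rfl (by omega)
  have h1 : ‖q ^ ((i + 1) * i / 2)‖ ≤ ‖q‖ ^ i := by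
    rw [norm_pow]; exact pow_le_pow_of_le_one hr0 hq.le hia
  have h2 : ‖q ^ ((i + 1) * (i + 2) / 2)‖ ≤ ‖q‖ ^ i := by
    rw [norm_pow]; exact pow_le_pow_of_le_one hr0 hq.le hib
  calc ‖((i : ℂ) + 1) * (q ^ ((i + 1) * i / 2) - q ^ ((i + 1) * (i + 2) / 2))‖
      = ((i : ℝ) + 1) * ‖q ^ ((i + 1) * i / 2) - q ^ ((i + 1) * (i + 2) / 2)‖ := by
        rw [norm_mul, hni]
    _ ≤ ((i : ℝ) + 1) * (‖q‖ ^ i + ‖q‖ ^ i) := by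
        refine mul_le_mul_of_nonneg_left ?_ (by positivity)
        exact le_trans (norm_sub_le _ _) (add_le_add h1 h2)
    _ = 2 * (((i : ℝ) + 1) * ‖q‖ ^ i) := by ring

lemma partial_sum (N : ℕ) :
    ∑ i ∈ Finset.range N, ((i : ℂ) + 1) * (q ^ ((i + 1) * i / 2) - q ^ ((i + 1) * (i + 2) / 2))
      = (∑ i ∈ Finset.range N, q ^ (i * (i + 1) / 2)) - (N : ℂ) * q ^ (N * (N + 1) / 2) := by
  induction N with
  | zero => simp
  | succ N ih =>
    rw [Finset.sum_range_succ, ih, Finset.sum_range_succ,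
      show (N + 1) * N = N * (N + 1) from by ring,
      show (N + 1) * (N + 2) = (N + 1) * ((N + 1) + 1) from by ring]
    push_cast
    ring

lemma tsum_main (hq : ‖q‖ < 1) :
    (∑' i : ℕ, ((i : ℂ) + 1) * (q ^ ((i + 1) * i / 2) - q ^ ((i + 1) * (i + 2) / 2)))
      = ∑' m : ℕ, q ^ (m * (m + 1) / 2) := by
  have hr0 : (0:ℝ) ≤ ‖q‖ := norm_nonneg q
  have hr' : ‖(‖q‖ : ℝ)‖ < 1 := by rwa [norm_norm]
  have t1 : Tendsto (fun N => ∑ i ∈ Finset.range N,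
        ((i : ℂ) + 1) * (q ^ ((i + 1) * i / 2) - q ^ ((i + 1) * (i + 2) / 2))) atTop
      (𝓝 (∑' i : ℕ, ((i : ℂ) + 1) * (q ^ ((i + 1) * i / 2) - q ^ ((i + 1) * (i + 2) / 2)))) :=
    (main_summable hq).hasSum.tendsto_sum_nat
  have t0 : Tendsto (fun N : ℕ => (N : ℂ) * q ^ (N * (N + 1) / 2)) atTop (𝓝 0) := by
    have hb : Tendsto (fun N : ℕ => (N : ℝ) * ‖q‖ ^ N) atTop (𝓝 0) := by
      have := (summable_pow_mul_geometric_of_norm_lt_one 1 hr').tendsto_atTop_zero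
      simpa [pow_one] using this
    refine squeeze_zero_norm (fun N => ?_) hb
    rw [norm_mul, Complex.norm_natCast, norm_pow]
    exact mul_le_mul_of_nonneg_left (pow_le_pow_of_le_one hr0 hq.le (tri_ge N))
      (Nat.cast_nonneg N)
  have t2 : Tendsto (fun N => (∑ i ∈ Finset.range N, q ^ (i * (i + 1) / 2))
        - (N : ℂ) * q ^ (N * (N + 1) / 2)) atTop
      (𝓝 ((∑' m : ℕ, q ^ (m * (m + 1) / 2)) - 0)) :=
    ((S_summable hq).hasSum.tendsto_sum_nat).sub t0
  have := tendsto_nhds_unique t1 ((t2.congr (fun N => (partial_sum N).symm)))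
  rwa [sub_zero] at this

end
end PSF

/-- `∑_{j≥1} j (q^{j(j-1)/2} - q^{j(j+1)/2}) = ∏_{n≥1} (1-qⁿ)(1+qⁿ)²`:
the generating function of levels of periodic symplectic fermions. -/
theorem periodic_symplectic_fermion_generating_function (q : ℂ) (hq : ‖q‖ < 1) :
    (Summable fun i : ℕ =>
      ((i : ℂ) + 1) * (q ^ ((i + 1) * i / 2) - q ^ ((i + 1) * (i + 2) / 2))) ∧
    (Multipliable fun n : ℕ => (1 - q ^ (n + 1)) * (1 + q ^ (n + 1)) ^ 2) ∧
    (∑' i : ℕ, ((i : ℂ) + 1) * (q ^ ((i + 1) * i / 2) - q ^ ((i + 1) * (i + 2) / 2))) =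
      ∏' n : ℕ, (1 - q ^ (n + 1)) * (1 + q ^ (n + 1)) ^ 2 := by
  have hEm := (PSF.E_mult hq).1
  have hPm := (PSF.P_mult hq).1
  have hfun : (fun n : ℕ => (1 - q ^ (n + 1)) * (1 + q ^ (n + 1)) ^ 2)
      = fun n : ℕ => (1 - q ^ (n + 1)) * ((1 + q ^ (n + 1)) * (1 + q ^ (n + 1))) :=
    funext fun n => by ring
  refine ⟨PSF.main_summable hq, ?_, ?_⟩
  · rw [hfun]; exact hEm.mul (hPm.mul hPm)
  · have hprod : (∏' n : ℕ, (1 - q ^ (n + 1)) * (1 + q ^ (n + 1)) ^ 2)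
        = (∏' n : ℕ, (1 - q ^ (n + 1)))
          * ((∏' n : ℕ, (1 + q ^ (n + 1))) * (∏' n : ℕ, (1 + q ^ (n + 1)))) := by
      rw [hfun, hEm.tprod_mul (hPm.mul hPm), hPm.tprod_mul hPm]
    rw [hprod, PSF.tsum_main hq]
    by_cases hq0 : q = 0
    · subst hq0
      have hS : (∑' m : ℕ, (0 : ℂ) ^ (m * (m + 1) / 2)) = 1 := by
        rw [tsum_eq_sum (s := {0}) (fun m hm => by
          have hm0 : m ≠ 0 := by simpa using hm
          have : m * (m + 1) / 2 ≠ 0 := by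
            have := PSF.tri_ge m; omega
          exact zero_pow this)]
        simp
      have hE1 : (∏' n : ℕ, ((1 : ℂ) - 0 ^ (n + 1))) = 1 := by
        have : (fun n : ℕ => (1 : ℂ) - 0 ^ (n + 1)) = fun _ => (1 : ℂ) :=
          funext fun n => by simp
        rw [this, tprod_one]
      have hP1 : (∏' n : ℕ, ((1 : ℂ) + 0 ^ (n + 1))) = 1 := by
        have : (fun n : ℕ => (1 : ℂ) + 0 ^ (n + 1)) = fun _ => (1 : ℂ) :=
          funext fun n => by simp
        rw [this, tprod_one]
      rw [hS, hE1, hP1]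
      norm_num
    · exact PSF.key hq hq0 (PSF.E_tendsto hq) (PSF.P_tendsto hq) (PSF.E_mult hq).2
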